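/- arXiv:1003.1999 — 3 statements merged into one kernel-verified Lean document; each statement's English description precedes it below -/
import Mathlib

section
/- For all non-negative integers n and m, the q-super Catalan number A_{n,m}(q) = [2n]!_q [2m]!_q / ([n]!_q [n+m]!_q [m]!_q) is a polynomial in q with integer coefficients. -/
open Polynomial

/-- The `q`-factorial `[n]! = ∏_{i=1}^n (1 + q + ⋯ + q^{i-1})` as a polynomial over `ℤ`. -/
noncomputable def qFactorial (n : ℕ) : Polynomial ℤ :=
  ∏ i ∈ Finset.range n, ∑ j ∈ Finset.range (i + 1), X ^ j

lemma divisors_eq_filter {n N : ℕ} (h : n + 1 ≤ N) :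
    (n + 1).divisors.erase 1 = (Finset.Icc 2 N).filter (· ∣ n + 1) := by
  ext d
  simp only [Finset.mem_erase, Nat.mem_divisors, Finset.mem_filter, Finset.mem_Icc]
  constructor
  · rintro ⟨hne, hd, -⟩
    have h1 := Nat.le_of_dvd (Nat.succ_pos n) hd
    have h0 : 1 ≤ d := Nat.pos_of_dvd_of_pos hd (Nat.succ_pos n)
    exact ⟨⟨by omega, h1.trans h⟩, hd⟩
  · rintro ⟨⟨h2, -⟩, hd⟩
    exact ⟨by omega, hd, Nat.succ_ne_zero n⟩

lemma qFactorial_eq_prod_cyclotomic {n N : ℕ} (h : n ≤ N) :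
    qFactorial n = ∏ d ∈ Finset.Icc 2 N, (cyclotomic d ℤ) ^ (n / d) := by
  induction n with
  | zero =>
      simp [qFactorial, Nat.zero_div]
  | succ n ih =>
      have hn : n ≤ N := Nat.le_of_succ_le h
      rw [qFactorial, Finset.prod_range_succ, ← qFactorial, ih hn,
        ← prod_cyclotomic_eq_geom_sum (Nat.succ_pos n) ℤ]
      rw [divisors_eq_filter h, Finset.prod_filter]
      rw [← Finset.prod_mul_distrib]
      refine Finset.prod_congr rfl fun d hd => ?_
      rw [Nat.succ_div]
      by_cases hdvd : d ∣ n + 1 <;> simp [hdvd, pow_add]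

lemma floor_ineq (d n m : ℕ) :
    n / d + (n + m) / d + m / d ≤ 2 * n / d + 2 * m / d := by
  rcases Nat.eq_zero_or_pos d with rfl | hd
  · simp
  have hn := Nat.div_add_mod n d
  have hm := Nat.div_add_mod m d
  set a := n / d; set r := n % d; set b := m / d; set s := m % d
  have hr : r < d := Nat.mod_lt _ hd
  have hs : s < d := Nat.mod_lt _ hd
  have h1 : (n + m) / d = a + b + (r + s) / d := by
    rw [← hn, ← hm]
    rw [show d * a + r + (d * b + s) = (r + s) + (a + b) * d by ring]
    rw [Nat.add_mul_div_right _ _ hd]; ring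
  have h2 : 2 * n / d = 2 * a + 2 * r / d := by
    rw [← hn, show 2 * (d * a + r) = 2 * r + 2 * a * d by ring,
      Nat.add_mul_div_right _ _ hd]; ring
  have h3 : 2 * m / d = 2 * b + 2 * s / d := by
    rw [← hm, show 2 * (d * b + s) = 2 * s + 2 * b * d by ring,
      Nat.add_mul_div_right _ _ hd]; ring
  rw [h1, h2, h3]
  have key : (r + s) / d ≤ 2 * r / d + 2 * s / d := by
    rcases le_total r s with hle | hle
    · exact le_add_left (Nat.div_le_div_right (by omega))
    · exact le_add_right (Nat.div_le_div_right (by omega))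
  omega

theorem q_super_catalan_integral (n m : ℕ) :
    qFactorial n * qFactorial (n + m) * qFactorial m ∣
      qFactorial (2 * n) * qFactorial (2 * m) := by
  set N := 2 * n + 2 * m with hN
  rw [qFactorial_eq_prod_cyclotomic (show n ≤ N by omega),
    qFactorial_eq_prod_cyclotomic (show n + m ≤ N by omega),
    qFactorial_eq_prod_cyclotomic (show m ≤ N by omega),
    qFactorial_eq_prod_cyclotomic (show 2 * n ≤ N by omega),
    qFactorial_eq_prod_cyclotomic (show 2 * m ≤ N by omega),
    ← Finset.prod_mul_distrib, ← Finset.prod_mul_distrib, ← Finset.prod_mul_distrib]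
  refine Finset.prod_dvd_prod_of_dvd _ _ fun d _ => ?_
  rw [← pow_add, ← pow_add, ← pow_add]
  exact pow_dvd_pow _ (floor_ineq d n m)
end

section
/- For all integers n ≥ m ≥ 0, the polynomial B_{n,m}(q) = [2n]!_q [m]!_q / ([n]!_q [2m]!_q [n-m]!_q) has non-negative integer coefficients. -/
open Polynomial

/-- The q-integer `[n] = 1 + q + ⋯ + q^{n-1}`. -/
noncomputable def qInt (n : ℕ) : Polynomial ℤ := ∑ j ∈ Finset.range n, X ^ j

lemma qFactorial_succ (n : ℕ) : qFactorial (n + 1) = qFactorial n * qInt (n + 1) := by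
  simp [qFactorial, qInt, Finset.prod_range_succ]

lemma qFactorial_zero : qFactorial 0 = 1 := by simp [qFactorial]

lemma qInt_mul (t : ℕ) : (X - 1) * qInt t = X ^ t - 1 := by
  rw [mul_comm]; simpa [qInt] using geom_sum_mul (X : Polynomial ℤ) t

lemma qInt_add (s t : ℕ) : qInt (s + t) = qInt s + X ^ s * qInt t := by
  rw [qInt, Finset.sum_range_add]
  simp [qInt, Finset.mul_sum, pow_add]

lemma qFactorial_ne_zero (n : ℕ) : qFactorial n ≠ 0 := by
  intro h
  have h2 := congrArg (Polynomial.eval (1 : ℤ)) h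
  simp [qFactorial, Polynomial.eval_prod] at h2
  rw [Finset.prod_eq_zero_iff] at h2
  obtain ⟨x, -, hx⟩ := h2
  omega

lemma nn_add {p q : Polynomial ℤ} (hp : ∀ i, 0 ≤ p.coeff i) (hq : ∀ i, 0 ≤ q.coeff i) :
    ∀ i, 0 ≤ (p + q).coeff i := by
  intro i; rw [Polynomial.coeff_add]; exact add_nonneg (hp i) (hq i)

lemma nn_mul {p q : Polynomial ℤ} (hp : ∀ i, 0 ≤ p.coeff i) (hq : ∀ i, 0 ≤ q.coeff i) :
    ∀ i, 0 ≤ (p * q).coeff i := by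
  intro i; rw [Polynomial.coeff_mul]
  exact Finset.sum_nonneg fun x _ => mul_nonneg (hp x.1) (hq x.2)

lemma nn_one : ∀ i, 0 ≤ (1 : Polynomial ℤ).coeff i := by
  intro i; rw [Polynomial.coeff_one]; positivity

lemma nn_X_pow (k : ℕ) : ∀ i, 0 ≤ ((X : Polynomial ℤ) ^ k).coeff i := by
  intro i; rw [Polynomial.coeff_X_pow]; positivity

/-- Positivity of Gaussian binomial coefficients, in cleared-denominator form. -/
lemma qBinom_pos : ∀ a b : ℕ, b ≤ a →
    ∃ P : Polynomial ℤ, (∀ i, 0 ≤ P.coeff i) ∧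
      qFactorial a = P * (qFactorial b * qFactorial (a - b)) := by
  intro a
  induction a with
  | zero =>
      intro b hb
      interval_cases b
      exact ⟨1, nn_one, by simp [qFactorial_zero]⟩
  | succ a ih =>
      intro b hb
      rcases Nat.eq_zero_or_pos b with rfl | hbpos
      · exact ⟨1, nn_one, by simp [qFactorial_zero]⟩
      obtain ⟨c, rfl⟩ : ∃ c, b = c + 1 := ⟨b - 1, by omega⟩
      rcases eq_or_lt_of_le hb with heq | hlt
      · have hca : c = a := by omega
        subst hca
        refine ⟨1, nn_one, ?_⟩
        rw [Nat.sub_self, qFactorial_zero]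
        ring
      · obtain ⟨u, rfl⟩ : ∃ u, a = c + 1 + u := ⟨a - (c + 1), by omega⟩
        obtain ⟨P₁, hP₁, e₁⟩ := ih c (by omega)
        obtain ⟨P₂, hP₂, e₂⟩ := ih (c + 1) (by omega)
        rw [show c + 1 + u - c = u + 1 by omega] at e₁
        rw [show c + 1 + u - (c + 1) = u by omega] at e₂
        refine ⟨P₁ + X ^ (c + 1) * P₂, nn_add hP₁ (nn_mul (nn_X_pow _) hP₂), ?_⟩
        rw [show c + 1 + u + 1 - (c + 1) = u + 1 by omega]
        have hsplit : qInt (c + 1 + u + 1) = qInt (c + 1) + X ^ (c + 1) * qInt (u + 1) := by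
          rw [show c + 1 + u + 1 = (c + 1) + (u + 1) by omega, qInt_add]
        have hf : qFactorial (c + 1 + u + 1) = qFactorial (c + 1 + u) * qInt (c + 1 + u + 1) :=
          qFactorial_succ _
        have hf1 : qFactorial (c + 1) = qFactorial c * qInt (c + 1) := qFactorial_succ _
        have hf2 : qFactorial (u + 1) = qFactorial u * qInt (u + 1) := qFactorial_succ _
        rw [hf2] at e₁
        rw [hf1] at e₂
        rw [hf, hsplit, hf1, hf2]
        linear_combination (qInt (c + 1)) * e₁ + (X ^ (c + 1) * qInt (u + 1)) * e₂

lemma key (a b : ℕ) :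
    qInt (2*a+2*b+3) * qInt (2*a+2*b+4) * qInt (a+1)
      = (1 + X^(2*a+b+2) + X^(3*a+b+3) + X^(3*a+2*b+4)) *
          (qInt (a+1) * qInt (a+b+2) * qInt (b+1))
        + X^(b+1) * (qInt (a+b+2) * qInt (2*a+1) * qInt (2*a+2)) := by
  have h3 : ((X - 1 : Polynomial ℤ)) ^ 3 ≠ 0 := by
    apply pow_ne_zero
    intro h
    have := congrArg (Polynomial.eval (0 : ℤ)) h
    simp at this
  apply mul_left_cancel₀ h3
  have e := qInt_mul
  linear_combination
    ((X - 1:Polynomial ℤ)^2 * qInt (2*a+2*b+4) * qInt (a+1)) * e (2*a+2*b+3)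
    + ((X^(2*a+2*b+3) - 1) * (X - 1) * qInt (a+1)) * e (2*a+2*b+4)
    + ((X^(2*a+2*b+3) - 1) * (X^(2*a+2*b+4) - 1)) * e (a+1)
    - (1 + X^(2*a+b+2) + X^(3*a+b+3) + X^(3*a+2*b+4)) *
      ( ((X - 1:Polynomial ℤ)^2 * qInt (a+b+2) * qInt (b+1)) * e (a+1)
        + ((X^(a+1) - 1) * (X - 1) * qInt (b+1)) * e (a+b+2)
        + ((X^(a+1) - 1) * (X^(a+b+2) - 1)) * e (b+1) )
    - X^(b+1) *
      ( ((X - 1:Polynomial ℤ)^2 * qInt (2*a+1) * qInt (2*a+2)) * e (a+b+2)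
        + ((X^(a+b+2) - 1) * (X - 1) * qInt (2*a+2)) * e (2*a+1)
        + ((X^(a+b+2) - 1) * (X^(2*a+1) - 1)) * e (2*a+2) )

lemma bigkey (a b : ℕ) :
    qFactorial (2*a+2*b+4) * qFactorial (a+1) *
      ((qFactorial (a+b+1) * qFactorial (2*a+2) * qFactorial b) *
        (qFactorial (a+b+1) * qFactorial (2*a) * qFactorial (b+1)))
    = (1 + X^(2*a+b+2) + X^(3*a+b+3) + X^(3*a+2*b+4)) *
        (qFactorial (2*a+2*b+2) * qFactorial (a+1)) *
        ((qFactorial (a+b+2) * qFactorial (2*a+2) * qFactorial (b+1)) *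
          (qFactorial (a+b+1) * qFactorial (2*a) * qFactorial (b+1)))
      + X^(b+1) * (qFactorial (2*a+2*b+2) * qFactorial a) *
        ((qFactorial (a+b+2) * qFactorial (2*a+2) * qFactorial (b+1)) *
          (qFactorial (a+b+1) * qFactorial (2*a+2) * qFactorial b)) := by
  have f1 : qFactorial (2*a+2*b+4)
      = qFactorial (2*a+2*b+2) * qInt (2*a+2*b+3) * qInt (2*a+2*b+4) := by
    rw [show 2*a+2*b+4 = (2*a+2*b+2)+1+1 by omega, qFactorial_succ, qFactorial_succ,
      show 2*a+2*b+2+1+1 = 2*a+2*b+4 by omega, show 2*a+2*b+2+1 = 2*a+2*b+3 by omega]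
  have f2 : qFactorial (a+1) = qFactorial a * qInt (a+1) := qFactorial_succ a
  have f3 : qFactorial (2*a+2) = qFactorial (2*a) * qInt (2*a+1) * qInt (2*a+2) := by
    rw [show 2*a+2 = (2*a)+1+1 by omega, qFactorial_succ, qFactorial_succ,
      show 2*a+1+1 = 2*a+2 by omega]
  have f4 : qFactorial (b+1) = qFactorial b * qInt (b+1) := qFactorial_succ b
  have f5 : qFactorial (a+b+2) = qFactorial (a+b+1) * qInt (a+b+2) := by
    rw [show a+b+2 = (a+b+1)+1 by omega, qFactorial_succ]
  rw [f1, f2, f3, f4, f5]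
  linear_combination
    (qFactorial (2*a+2*b+2) * qFactorial a * qFactorial (a+b+1)^2 * qFactorial (2*a)^2 *
      qFactorial b^2 * qInt (2*a+1) * qInt (2*a+2) * qInt (b+1)) * key a b

lemma qB_aux : ∀ n m : ℕ, m ≤ n →
    ∃ P : Polynomial ℤ, (∀ i, 0 ≤ P.coeff i) ∧
      qFactorial (2 * n) * qFactorial m =
        P * (qFactorial n * qFactorial (2 * m) * qFactorial (n - m)) := by
  intro n
  induction n with
  | zero =>
      intro m hm
      interval_cases m
      exact ⟨1, nn_one, by simp [qFactorial_zero]⟩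
  | succ n ih =>
      intro m hm
      rcases eq_or_lt_of_le hm with heq | hlt
      · subst heq
        refine ⟨1, nn_one, ?_⟩
        rw [Nat.sub_self, qFactorial_zero]
        ring
      · rcases Nat.eq_zero_or_pos m with rfl | hmpos
        · obtain ⟨P, hP, e⟩ := qBinom_pos (2 * (n + 1)) (n + 1) (by omega)
          rw [show 2 * (n + 1) - (n + 1) = n + 1 by omega] at e
          refine ⟨P, hP, ?_⟩
          simp only [Nat.mul_zero, Nat.sub_zero, qFactorial_zero, mul_one]
          linear_combination e
        · obtain ⟨a, rfl⟩ : ∃ a, m = a + 1 := ⟨m - 1, by omega⟩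
          obtain ⟨b, rfl⟩ : ∃ b, n = a + 1 + b := ⟨n - (a + 1), by omega⟩
          obtain ⟨P₁, hP₁, e₁⟩ := ih (a + 1) (by omega)
          obtain ⟨P₂, hP₂, e₂⟩ := ih a (by omega)
          rw [show a+1+b-(a+1) = b by omega, show 2*(a+1+b) = 2*a+2*b+2 by omega,
            show a+1+b = a+b+1 by omega, show 2*(a+1) = 2*a+2 by omega] at e₁
          rw [show a+1+b-a = b+1 by omega, show 2*(a+1+b) = 2*a+2*b+2 by omega,
            show a+1+b = a+b+1 by omega] at e₂
          refine ⟨(1 + X^(2*a+b+2) + X^(3*a+b+3) + X^(3*a+2*b+4)) * P₁ + X^(b+1) * P₂,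
            nn_add (nn_mul (nn_add (nn_add (nn_add nn_one (nn_X_pow _)) (nn_X_pow _))
              (nn_X_pow _)) hP₁) (nn_mul (nn_X_pow _) hP₂), ?_⟩
          rw [show a+1+b+1-(a+1) = b+1 by omega, show 2*(a+1+b+1) = 2*a+2*b+4 by omega,
            show a+1+b+1 = a+b+2 by omega, show 2*(a+1) = 2*a+2 by omega]
          have hD : (qFactorial (a+b+1) * qFactorial (2*a+2) * qFactorial b) *
              (qFactorial (a+b+1) * qFactorial (2*a) * qFactorial (b+1)) ≠ 0 :=
            mul_ne_zero
              (mul_ne_zero (mul_ne_zero (qFactorial_ne_zero _) (qFactorial_ne_zero _))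
                (qFactorial_ne_zero _))
              (mul_ne_zero (mul_ne_zero (qFactorial_ne_zero _) (qFactorial_ne_zero _))
                (qFactorial_ne_zero _))
          apply mul_right_cancel₀ hD
          linear_combination (bigkey a b)
            + ((1 + X^(2*a+b+2) + X^(3*a+b+3) + X^(3*a+2*b+4)) *
                (qFactorial (a+b+2) * qFactorial (2*a+2) * qFactorial (b+1)) *
                (qFactorial (a+b+1) * qFactorial (2*a) * qFactorial (b+1))) * e₁
            + (X^(b+1) * (qFactorial (a+b+2) * qFactorial (2*a+2) * qFactorial (b+1)) *
                (qFactorial (a+b+1) * qFactorial (2*a+2) * qFactorial b)) * e₂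

theorem q_B_positive (n m : ℕ) (h : m ≤ n) :
    ∃ P : Polynomial ℤ, (∀ i, 0 ≤ P.coeff i) ∧
      qFactorial (2 * n) * qFactorial m =
        P * (qFactorial n * qFactorial (2 * m) * qFactorial (n - m)) := qB_aux n m h
end

section
/- For non-negative integers a, b, c, the q-Chu–Vandermonde identity holds: [a+b choose c]_q = Σ_{k=0}^{c} q^{k(b-c+k)} [a choose k]_q [b choose c-k]_q, where q-binomial coefficients are taken to be 0 when out of range. -/
open Polynomial

/-- The `q`-factorial `[n]! = ∏_{i=1}^n (1 + q + ⋯ + q^{i-1})` in `ℚ(q)`. -/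
noncomputable def qFac (n : ℕ) : RatFunc ℚ :=
  ∏ i ∈ Finset.range n, ∑ j ∈ Finset.range (i + 1), RatFunc.X ^ j

/-- The Gaussian binomial coefficient `[n choose m]_q`, zero when out of range. -/
noncomputable def qBinom (n m : ℕ) : RatFunc ℚ :=
  if m ≤ n then qFac n / (qFac (n - m) * qFac m) else 0

noncomputable def S (m : ℕ) : RatFunc ℚ := ∑ j ∈ Finset.range m, RatFunc.X ^ j

lemma S_ne_zero (m : ℕ) : S (m + 1) ≠ 0 := by
  have h : (∑ j ∈ Finset.range (m+1), (Polynomial.X : ℚ[X]) ^ j) ≠ 0 := by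
    intro h
    have := congrArg (Polynomial.eval 1) h
    simp [Polynomial.eval_finset_sum] at this
    exact Nat.cast_add_one_ne_zero m this
  intro h0
  apply h
  apply RatFunc.algebraMap_injective ℚ
  simpa [map_sum, S] using h0

lemma qFac_succ (n : ℕ) : qFac (n + 1) = qFac n * S (n + 1) := Finset.prod_range_succ _ n

lemma qFac_zero : qFac 0 = 1 := Finset.prod_range_zero _

lemma qFac_ne_zero (n : ℕ) : qFac n ≠ 0 := by
  induction n with
  | zero => simp [qFac]
  | succ n ih => rw [qFac_succ]; exact mul_ne_zero ih (S_ne_zero n)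

lemma S_add (a b : ℕ) : S (a + b) = S a + RatFunc.X ^ a * S b := by
  unfold S
  rw [Finset.sum_range_add, Finset.mul_sum]
  simp [pow_add]

lemma qBinom_zero (n : ℕ) : qBinom n 0 = 1 := by
  simp [qBinom, qFac_zero, div_self (qFac_ne_zero n)]

lemma qBinom_of_gt {n m : ℕ} (h : n < m) : qBinom n m = 0 := by
  simp [qBinom, Nat.not_le.mpr h]

lemma pascal (n k : ℕ) (hk : 1 ≤ k) :
    qBinom (n + 1) k = qBinom n k + RatFunc.X ^ ((n : ℤ) + 1 - k) * qBinom n (k - 1) := by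
  rcases lt_trichotomy k (n + 1) with h | h | h
  · -- k ≤ n
    have hkn : k ≤ n := by omega
    obtain ⟨k, rfl⟩ : ∃ k', k = k' + 1 := ⟨k - 1, by omega⟩
    have hx : (n : ℤ) + 1 - ((k+1 : ℕ) : ℤ) = ((n - k : ℕ) : ℤ) := by push_cast; omega
    rw [hx, zpow_natCast]
    rw [qBinom, qBinom, qBinom, if_pos (by omega), if_pos hkn, if_pos (by omega)]
    have e1 : n + 1 - (k + 1) = n - k := by omega
    have e2 : (k + 1) - 1 = k := rfl
    have e3 : n - k = (n - (k+1)) + (n - k - (n - (k+1))) := by omega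
    have e4 : n - k - (n - (k+1)) = 1 := by omega
    rw [e1, e2]
    have hs : S (n - k + 1) = S (n + 1 - (k + 1) + 1) := by rw [e1]
    -- key: qFac (n+1) = qFac n * S(n+1), qFac (n-k) relates
    have h1 : qFac (n + 1) = qFac n * S (n + 1) := qFac_succ n
    have h2 : qFac (n - k) = qFac (n - (k+1)) * S (n - k) := by
      have : n - k = (n - (k+1)) + 1 := by omega
      rw [this, qFac_succ, ← this]
    have h3 : qFac (k + 1) = qFac k * S (k + 1) := qFac_succ k
    have hkey : S (n + 1) = S (n - k) + RatFunc.X ^ (n - k) * S (k + 1) := by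
      have : n + 1 = (n - k) + (k + 1) := by omega
      rw [this, S_add]
    have hSnk : S (n - k) ≠ 0 := by
      have : n - k = (n - (k+1)) + 1 := by omega
      rw [this]; exact S_ne_zero _
    rw [h1, h2, h3, hkey]
    field_simp [qFac_ne_zero, S_ne_zero, hSnk]
  · -- k = n + 1
    subst h
    rw [qBinom, if_pos le_rfl, qBinom, if_neg (by omega), qBinom, if_pos (by omega)]
    simp [qFac_zero, div_self (qFac_ne_zero (n+1)), div_self (qFac_ne_zero n)]
  · -- k > n + 1
    rw [qBinom_of_gt h, qBinom_of_gt (by omega : n < k), qBinom_of_gt (by omega : n < k - 1)]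
    simp

theorem q_chu_vandermonde (a b c : ℕ) :
    qBinom (a + b) c =
      ∑ k ∈ Finset.range (c + 1),
        RatFunc.X ^ ((k : ℤ) * ((b : ℤ) - (c : ℤ) + (k : ℤ))) *
          qBinom a k * qBinom b (c - k) := by
  induction a generalizing c with
  | zero =>
    rw [Finset.sum_eq_single 0]
    · simp [qBinom_zero]
    · intro k hk hk0
      rw [qBinom_of_gt (by omega : 0 < k), mul_zero, zero_mul]
    · intro h; simp at h
  | succ a ih =>
    rcases Nat.eq_zero_or_pos c with rfl | hc
    · simp [qBinom_zero]
    obtain ⟨c, rfl⟩ : ∃ c', c = c' + 1 := ⟨c - 1, by omega⟩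
    have hL : qBinom (a + 1 + b) (c + 1) =
        qBinom (a + b) (c + 1) +
          RatFunc.X ^ ((a : ℤ) + (b : ℤ) - (c : ℤ)) * qBinom (a + b) c := by
      have hp := pascal (a + b) (c + 1) (by omega)
      rw [show a + 1 + b = a + b + 1 by omega, hp]
      congr 2
      · push_cast; ring_nf
    rw [hL, ih (c + 1), ih c]
    have key : ∀ k ∈ Finset.range (c + 1),
        RatFunc.X ^ (((k+1 : ℕ) : ℤ) * ((b : ℤ) - ((c+1 : ℕ) : ℤ) + ((k+1 : ℕ) : ℤ))) *
            qBinom (a + 1) (k + 1) * qBinom b (c + 1 - (k + 1)) =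
          RatFunc.X ^ (((k+1 : ℕ) : ℤ) * ((b : ℤ) - ((c+1 : ℕ) : ℤ) + ((k+1 : ℕ) : ℤ))) *
              qBinom a (k + 1) * qBinom b (c + 1 - (k + 1)) +
            RatFunc.X ^ ((a : ℤ) + (b : ℤ) - (c : ℤ)) *
              (RatFunc.X ^ ((k : ℤ) * ((b : ℤ) - (c : ℤ) + (k : ℤ))) *
                qBinom a k * qBinom b (c - k)) := by
      intro k hk
      rw [pascal a (k + 1) (by omega)]
      have e1 : c + 1 - (k + 1) = c - k := by omega
      have e2 : (k + 1) - 1 = k := rfl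
      rw [e1, e2]
      have hx : (RatFunc.X : RatFunc ℚ) ^ (((k+1 : ℕ) : ℤ) * ((b : ℤ) - ((c+1 : ℕ) : ℤ) + ((k+1 : ℕ) : ℤ))) *
          RatFunc.X ^ ((a : ℤ) + 1 - ((k+1 : ℕ) : ℤ)) =
          RatFunc.X ^ ((a : ℤ) + (b : ℤ) - (c : ℤ)) *
          RatFunc.X ^ ((k : ℤ) * ((b : ℤ) - (c : ℤ) + (k : ℤ))) := by
        rw [← zpow_add₀ (RatFunc.X_ne_zero (K := ℚ)), ← zpow_add₀ (RatFunc.X_ne_zero (K := ℚ))]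
        congr 1
        push_cast; ring
      linear_combination (qBinom a k * qBinom b (c - k)) * hx
    rw [Finset.sum_range_succ' _ (c + 1)]
    conv_rhs => rw [Finset.sum_range_succ' _ (c + 1)]
    rw [Finset.sum_congr rfl key, Finset.sum_add_distrib, ← Finset.mul_sum]
    simp only [qBinom_zero]
    ring
end
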